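/- Let pρ : (0,∞) × (0,∞) → ℝ be positive, and for u = (ρ,v,θ) with ρ > 0, θ > 0 set A₁₁(u) = pρ(ρ,θ)·v/(θρ) and E₁₁(u) = pρ(ρ,θ)/(θρ), regarded as 1×1 real matrices. Then for every real number σ: the kernel of A₁₁(u) − σ·E₁₁(u) has dimension 1 if v = σ and dimension 0 if v ≠ σ. In particular, for each fixed σ the map u ↦ dim ker(A₁₁(u) − σ E₁₁(u)) is not constant, i.e. the condition of block linear degeneracy fails for the compressible Navier–Stokes equations in Eulerian coordinates. -/
import Mathlib


open Matrix

lemma ker_dim_aux (c : ℝ) :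
    Module.finrank ℝ (LinearMap.ker (Matrix.toLin'
      (Matrix.of fun _ _ : Fin 1 => c))) = if c = 0 then 1 else 0 := by
  have hm : (Matrix.of fun _ _ : Fin 1 => c) = c • (1 : Matrix (Fin 1) (Fin 1) ℝ) := by
    ext i j
    fin_cases i; fin_cases j
    simp
  rw [hm, _root_.map_smul]
  by_cases hc : c = 0
  · subst hc
    rw [zero_smul, LinearMap.ker_zero, finrank_top, if_pos rfl]
    simp
  · simp only [hc, if_false]
    rw [LinearMap.ker_smul _ _ hc]
    have : LinearMap.ker (Matrix.toLin' (1 : Matrix (Fin 1) (Fin 1) ℝ)) = ⊥ := by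
      simp [Matrix.toLin'_one]
    rw [this, finrank_bot]

/-- For the Eulerian compressible Navier–Stokes equations, with upper-left
`1×1` blocks `A₁₁(u) = pρ·v/(θρ)` and `E₁₁(u) = pρ/(θρ)` (`pρ > 0`), for every
real `σ` the kernel of `A₁₁(u) - σ·E₁₁(u)` has dimension `1` if `v = σ` and `0`
if `v ≠ σ`; in particular the dimension is not constant in `u`, i.e. the
condition of block linear degeneracy fails. -/
theorem stmt_4 (pρ : ℝ → ℝ → ℝ) (hpρ : ∀ r t : ℝ, 0 < r → 0 < t → 0 < pρ r t) :
    ∀ σ : ℝ,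
      (∀ ρ v θ : ℝ, 0 < ρ → 0 < θ →
        Module.finrank ℝ (LinearMap.ker (Matrix.toLin'
          ((Matrix.of fun _ _ : Fin 1 => pρ ρ θ * v / (θ * ρ)) -
            σ • (Matrix.of fun _ _ : Fin 1 => pρ ρ θ / (θ * ρ))))) =
          if v = σ then 1 else 0) ∧
      ¬ ∃ d : ℕ, ∀ ρ v θ : ℝ, 0 < ρ → 0 < θ →
        Module.finrank ℝ (LinearMap.ker (Matrix.toLin'
          ((Matrix.of fun _ _ : Fin 1 => pρ ρ θ * v / (θ * ρ)) -
            σ • (Matrix.of fun _ _ : Fin 1 => pρ ρ θ / (θ * ρ))))) = d := by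
  intro σ
  have key : ∀ ρ v θ : ℝ, 0 < ρ → 0 < θ →
      Module.finrank ℝ (LinearMap.ker (Matrix.toLin'
        ((Matrix.of fun _ _ : Fin 1 => pρ ρ θ * v / (θ * ρ)) -
          σ • (Matrix.of fun _ _ : Fin 1 => pρ ρ θ / (θ * ρ))))) =
        if v = σ then 1 else 0 := by
    intro ρ v θ hρ hθ
    have hden : θ * ρ ≠ 0 := by positivity
    have hp : pρ ρ θ ≠ 0 := ne_of_gt (hpρ ρ θ hρ hθ)
    have hm : ((Matrix.of fun _ _ : Fin 1 => pρ ρ θ * v / (θ * ρ)) -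
        σ • (Matrix.of fun _ _ : Fin 1 => pρ ρ θ / (θ * ρ))) =
        (Matrix.of fun _ _ : Fin 1 => pρ ρ θ * v / (θ * ρ) - σ * (pρ ρ θ / (θ * ρ))) := by
      ext i j; simp [Matrix.sub_apply]
    rw [hm, ker_dim_aux]
    have hiff : pρ ρ θ * v / (θ * ρ) - σ * (pρ ρ θ / (θ * ρ)) = 0 ↔ v = σ := by
      have hfac : pρ ρ θ * v / (θ * ρ) - σ * (pρ ρ θ / (θ * ρ))
          = pρ ρ θ / (θ * ρ) * (v - σ) := by ring
      rw [hfac, mul_eq_zero]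
      have hne : pρ ρ θ / (θ * ρ) ≠ 0 := div_ne_zero hp hden
      simp [hne, sub_eq_zero]
    simp only [hiff]
  refine ⟨key, ?_⟩
  rintro ⟨d, hd⟩
  have h1 := (hd 1 σ 1 one_pos one_pos).symm.trans (key 1 σ 1 one_pos one_pos)
  have h2 := (hd 1 (σ + 1) 1 one_pos one_pos).symm.trans (key 1 (σ + 1) 1 one_pos one_pos)
  rw [if_pos rfl] at h1
  rw [if_neg (by linarith : σ + 1 ≠ σ)] at h2
  omega
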